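/- Let n ≥ 1 and let X : ℝ → ℝ^{n×n} be differentiable at t with derivative X′(t). Define ad_A(B) = AB − BA for square matrices. Then the series Σ_{k≥0} ((−1)ᵏ/(k+1)!) ad_{X(t)}ᵏ(X′(t)) converges absolutely, and the map s ↦ exp(X(s)) is differentiable at t with derivative exp(X(t)) · Σ_{k≥0} ((−1)ᵏ/(k+1)!) ad_{X(t)}ᵏ(X′(t)). -/

import Mathlib

open Matrix

attribute [local instance] Matrix.linftyOpNormedAddCommGroup Matrix.linftyOpNormedRing
  Matrix.linftyOpNormedAlgebra

/-- Iterated adjoint `ad_Aᵏ(B)` where `ad_A(B) = AB − BA`. -/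
def adIter {n : ℕ} (A : Matrix (Fin n) (Fin n) ℝ) (B : Matrix (Fin n) (Fin n) ℝ) (k : ℕ) :
    Matrix (Fin n) (Fin n) ℝ :=
  (fun M => A * M - M * A)^[k] B

open Finset NormedSpace ContinuousLinearMap Metric

/- ### Combinatorial auxiliary lemmas -/

lemma aux_choose_sum (N q : ℕ) (h : q ≤ N) :
    ∑ p ∈ Finset.range (N - q + 1), (N - p).choose q = (N + 1).choose (q + 1) := by
  have h2 := Nat.sum_range_add_choose (N - q) q
  rw [show N - q + q + 1 = N + 1 by omega] at h2
  calc ∑ p ∈ range (N - q + 1), (N - p).choose q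
      = ∑ p ∈ range (N - q + 1), ((N - q + 1) - 1 - p + q).choose q := by
        refine sum_congr rfl fun p hp => ?_
        simp only [mem_range] at hp
        congr 1
        omega
    _ = ∑ i ∈ range (N - q + 1), (i + q).choose q :=
        Finset.sum_range_reflect (fun i => (i + q).choose q) (N - q + 1)
    _ = (N + 1).choose (q + 1) := h2


lemma aux_coeff (N m : ℕ) (h : m ≤ N) :
    (((N + 1).factorial : ℝ))⁻¹ * ((N + 1).choose (m + 1) : ℝ) =
      (((N - m).factorial : ℝ))⁻¹ * (((m + 1).factorial : ℝ))⁻¹ := by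
  have key := Nat.choose_mul_factorial_mul_factorial (Nat.succ_le_succ h)
  rw [show N + 1 - (m + 1) = N - m by omega] at key
  have keyR : ((N + 1).choose (m + 1) : ℝ) * ((m + 1).factorial : ℝ) * ((N - m).factorial : ℝ)
      = ((N + 1).factorial : ℝ) := by exact_mod_cast congrArg (Nat.cast (R := ℝ)) key
  have h1 : ((m + 1).factorial : ℝ) ≠ 0 := Nat.cast_ne_zero.2 (Nat.factorial_ne_zero _)
  have h2 : ((N - m).factorial : ℝ) ≠ 0 := Nat.cast_ne_zero.2 (Nat.factorial_ne_zero _)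
  have h3 : ((N + 1).factorial : ℝ) ≠ 0 := Nat.cast_ne_zero.2 (Nat.factorial_ne_zero _)
  field_simp
  linear_combination keyR

lemma aux_E1 {R : Type*} [Ring R] {x y : R} (h : Commute x y) (N : ℕ) :
    ∑ p ∈ Finset.range (N + 1), x ^ p * y ^ (N - p)
      = ∑ m ∈ Finset.range (N + 1), ((N + 1).choose (m + 1)) • (x ^ (N - m) * (y - x) ^ m) := by
  set v := y - x with hv
  have hxv : Commute x v := h.sub_right (Commute.refl x)
  have hy : y = x + v := by rw [hv]; abel
  calc ∑ p ∈ range (N + 1), x ^ p * y ^ (N - p)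
      = ∑ p ∈ range (N + 1), ∑ m ∈ range (N - p + 1),
          x ^ p * (x ^ m * v ^ (N - p - m) * ((N - p).choose m : R)) := by
        refine sum_congr rfl fun p hp => ?_
        rw [hy, hxv.add_pow, Finset.mul_sum]
    _ = ∑ p ∈ range (N + 1), ∑ q ∈ range (N - p + 1),
          ((N - p).choose q) • (x ^ (N - q) * v ^ q) := by
        refine sum_congr rfl fun p hp => ?_
        rw [← Finset.sum_range_reflect]
        refine sum_congr rfl fun q hq => ?_
        simp only [mem_range] at hp hq
        have hpN : p ≤ N := by omega
        have hq' : q ≤ N - p := by omega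
        rw [show N - p + 1 - 1 - q = N - p - q by omega,
          show N - p - (N - p - q) = q by omega, Nat.choose_symm hq',
          nsmul_eq_mul, (Nat.cast_commute ((N - p).choose q) (x ^ (N - q) * v ^ q)).eq,
          ← mul_assoc, ← mul_assoc, ← pow_add, show p + (N - p - q) = N - q by omega]
    _ = ∑ q ∈ range (N + 1), ∑ p ∈ range (N - q + 1),
          ((N - p).choose q) • (x ^ (N - q) * v ^ q) := by
        refine Finset.sum_comm' fun p q => ?_
        simp only [mem_range]
        omega
    _ = ∑ q ∈ range (N + 1), ((N + 1).choose (q + 1)) • (x ^ (N - q) * v ^ q) := by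
        refine sum_congr rfl fun q hq => ?_
        simp only [mem_range] at hq
        rw [← Finset.sum_smul, aux_choose_sum N q (by omega)]

/- ### Analytic auxiliary lemmas -/

section Aux

variable {𝔸 : Type*} [NormedRing 𝔸] [NormedAlgebra ℝ 𝔸]

lemma aux_pow_hasFDerivAt (k : ℕ) (Y : 𝔸) :
    HasFDerivAt (fun Z : 𝔸 => Z ^ k)
      (∑ p ∈ Finset.range k,
        ContinuousLinearMap.mulLeftRight ℝ 𝔸 (Y ^ p) (Y ^ (k - 1 - p))) Y := by
  induction k with
  | zero => simpa using hasFDerivAt_const (1 : 𝔸) Y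
  | succ k ih =>
    have h2 : HasFDerivAt (fun Z : 𝔸 => Z ^ (k + 1))
        (Y ^ k • ContinuousLinearMap.id ℝ 𝔸 +
          (∑ p ∈ Finset.range k,
            ContinuousLinearMap.mulLeftRight ℝ 𝔸 (Y ^ p) (Y ^ (k - 1 - p))).smulRight Y) Y := by
      simp only [pow_succ]
      exact ih.mul' (hasFDerivAt_id Y)
    convert h2 using 1
    ext H
    simp only [ContinuousLinearMap.sum_apply, ContinuousLinearMap.mulLeftRight_apply,
      ContinuousLinearMap.add_apply, ContinuousLinearMap.smul_apply,
      ContinuousLinearMap.coe_id', id_eq, ContinuousLinearMap.smulRight_apply, smul_eq_mul]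
    rw [Finset.sum_range_succ, Finset.sum_mul]
    simp only [Nat.add_sub_cancel]
    have h3 : ∀ p ∈ Finset.range k, Y ^ p * H * Y ^ (k - p) = Y ^ p * H * Y ^ (k - 1 - p) * Y := by
      intro p hp
      simp only [Finset.mem_range] at hp
      rw [mul_assoc (Y ^ p * H), ← pow_succ, show k - 1 - p + 1 = k - p by omega]
    rw [Finset.sum_congr rfl h3, Nat.sub_self, pow_zero, mul_one, add_comm]

lemma aux_bound [NormOneClass 𝔸] (k : ℕ) (Y : 𝔸) {r : ℝ} (hY : ‖Y‖ ≤ r) :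
    ‖((k.factorial : ℝ))⁻¹ • ∑ p ∈ Finset.range k,
        ContinuousLinearMap.mulLeftRight ℝ 𝔸 (Y ^ p) (Y ^ (k - 1 - p))‖
      ≤ k * r ^ (k - 1) * ((k.factorial : ℝ))⁻¹ := by
  have hr : (0 : ℝ) ≤ r := le_trans (norm_nonneg Y) hY
  have h1 : ‖∑ p ∈ Finset.range k,
      ContinuousLinearMap.mulLeftRight ℝ 𝔸 (Y ^ p) (Y ^ (k - 1 - p))‖ ≤ k * r ^ (k - 1) := by
    refine le_trans (norm_sum_le _ _) ?_
    have hterm : ∀ p ∈ Finset.range k,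
        ‖ContinuousLinearMap.mulLeftRight ℝ 𝔸 (Y ^ p) (Y ^ (k - 1 - p))‖ ≤ r ^ (k - 1) := by
      intro p hp
      simp only [Finset.mem_range] at hp
      refine le_trans (ContinuousLinearMap.opNorm_mulLeftRight_apply_apply_le ℝ 𝔸 _ _) ?_
      calc ‖Y ^ p‖ * ‖Y ^ (k - 1 - p)‖ ≤ ‖Y‖ ^ p * ‖Y‖ ^ (k - 1 - p) :=
            mul_le_mul (norm_pow_le Y p) (norm_pow_le Y _) (norm_nonneg _) (by positivity)
        _ = ‖Y‖ ^ (k - 1) := by rw [← pow_add]; congr 1; omega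
        _ ≤ r ^ (k - 1) := pow_le_pow_left₀ (norm_nonneg Y) hY _
    calc ∑ p ∈ Finset.range k, ‖ContinuousLinearMap.mulLeftRight ℝ 𝔸 (Y ^ p) (Y ^ (k - 1 - p))‖
        ≤ ∑ _p ∈ Finset.range k, r ^ (k - 1) := Finset.sum_le_sum hterm
      _ = k * r ^ (k - 1) := by rw [Finset.sum_const, Finset.card_range, nsmul_eq_mul]
  refine le_trans (ContinuousLinearMap.opNorm_smul_le _ _) ?_
  rw [Real.norm_eq_abs, abs_of_nonneg (by positivity : (0:ℝ) ≤ ((k.factorial : ℝ))⁻¹)]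
  calc ((k.factorial : ℝ))⁻¹ * ‖∑ p ∈ Finset.range k,
        ContinuousLinearMap.mulLeftRight ℝ 𝔸 (Y ^ p) (Y ^ (k - 1 - p))‖
      ≤ ((k.factorial : ℝ))⁻¹ * (k * r ^ (k - 1)) :=
        mul_le_mul_of_nonneg_left h1 (by positivity)
    _ = k * r ^ (k - 1) * ((k.factorial : ℝ))⁻¹ := by ring


lemma aux_summable (c : ℝ) :
    Summable (fun k : ℕ => (k : ℝ) * c ^ (k - 1) * ((k.factorial : ℝ))⁻¹) := by
  rw [← summable_nat_add_iff 1]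
  refine (Real.summable_pow_div_factorial c).congr fun j => ?_
  have hj : ((j + 1).factorial : ℝ) = (j + 1) * (j.factorial : ℝ) := by
    rw [Nat.factorial_succ]; push_cast; ring
  have h0 : (j.factorial : ℝ) ≠ 0 := Nat.cast_ne_zero.2 (Nat.factorial_ne_zero _)
  rw [hj, Nat.add_sub_cancel]
  push_cast
  field_simp


lemma aux_exp_hasFDerivAt [CompleteSpace 𝔸] [NormOneClass 𝔸] (A : 𝔸) :
    HasFDerivAt (NormedSpace.exp)
      (∑' k : ℕ, ((k.factorial : ℝ))⁻¹ • ∑ p ∈ Finset.range k,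
        ContinuousLinearMap.mulLeftRight ℝ 𝔸 (A ^ p) (A ^ (k - 1 - p))) A := by
  set r : ℝ := ‖A‖ + 1 with hr
  have hr0 : (0 : ℝ) < r := by positivity
  have key := hasFDerivAt_tsum_of_isPreconnected
    (f := fun (k : ℕ) (Y : 𝔸) => ((k.factorial : ℝ))⁻¹ • Y ^ k)
    (f' := fun (k : ℕ) (Y : 𝔸) => ((k.factorial : ℝ))⁻¹ • ∑ p ∈ Finset.range k,
      ContinuousLinearMap.mulLeftRight ℝ 𝔸 (Y ^ p) (Y ^ (k - 1 - p)))
    (u := fun k : ℕ => (k : ℝ) * r ^ (k - 1) * ((k.factorial : ℝ))⁻¹)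
    (aux_summable r) isOpen_ball (convex_ball (0 : 𝔸) r).isPreconnected
    (fun k Y _hY => (aux_pow_hasFDerivAt k Y).const_smul ((k.factorial : ℝ))⁻¹)
    (fun k Y hY => aux_bound k Y (le_of_lt (mem_ball_zero_iff.mp hY)))
    (x₀ := 0) (mem_ball_self hr0)
    (by
      refine (summable_nat_add_iff 1).mp ?_
      refine Summable.congr summable_zero fun j => ?_
      simp [zero_pow])
    (x := A) (mem_ball_zero_iff.mpr (by rw [hr]; linarith))
  have : NormedSpace.exp = fun Y : 𝔸 => ∑' k : ℕ, ((k.factorial : ℝ))⁻¹ • Y ^ k := by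
    ext Y
    rw [NormedSpace.exp_eq_tsum ℝ]
  rw [this]
  exact key

end Aux

/- ### Matrix-specific auxiliary lemmas -/

section MatrixAux

variable {n : ℕ}

lemma adIter_succ (A B : Matrix (Fin n) (Fin n) ℝ) (k : ℕ) :
    adIter A B (k + 1) = A * adIter A B k - adIter A B k * A := by
  simp only [adIter, Function.iterate_succ_apply']


lemma norm_adIter_le (A B : Matrix (Fin n) (Fin n) ℝ) (k : ℕ) :
    ‖adIter A B k‖ ≤ (2 * ‖A‖) ^ k * ‖B‖ := by
  induction k with
  | zero => simp [adIter]
  | succ k ih =>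
    rw [adIter_succ]
    set w := adIter A B k
    calc ‖A * w - w * A‖ ≤ ‖A * w‖ + ‖w * A‖ := norm_sub_le _ _
      _ ≤ ‖A‖ * ‖w‖ + ‖w‖ * ‖A‖ := add_le_add (norm_mul_le _ _) (norm_mul_le _ _)
      _ = 2 * ‖A‖ * ‖w‖ := by ring
      _ ≤ 2 * ‖A‖ * ((2 * ‖A‖) ^ k * ‖B‖) := by
          refine mul_le_mul_of_nonneg_left ih (by positivity)
      _ = (2 * ‖A‖) ^ (k + 1) * ‖B‖ := by ring


lemma adIter_eq_pow (A B : Matrix (Fin n) (Fin n) ℝ) (m : ℕ) :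
    adIter A B m = ((-1 : ℝ)) ^ m •
      (((LinearMap.mulRight ℝ A - LinearMap.mulLeft ℝ A :
        Module.End ℝ (Matrix (Fin n) (Fin n) ℝ))) ^ m) B := by
  set v : Module.End ℝ (Matrix (Fin n) (Fin n) ℝ) :=
    LinearMap.mulRight ℝ A - LinearMap.mulLeft ℝ A with hv
  induction m with
  | zero => simp [adIter]
  | succ m ih =>
    rw [adIter_succ, ih, pow_succ' v m]
    have happ : (v * v ^ m) B = (v ^ m) B * A - A * (v ^ m) B := by
      simp [hv, Module.End.mul_apply, LinearMap.sub_apply, LinearMap.mulRight_apply,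
        LinearMap.mulLeft_apply]
    rw [happ, pow_succ]
    set w := (v ^ m) B
    rw [mul_smul_comm, smul_mul_assoc, ← smul_sub, mul_smul, neg_one_smul, neg_sub]

set_option maxHeartbeats 1000000 in
/-- Left-trivialized derivative of the matrix exponential: if `X` is differentiable at `t`,
then the right-Jacobian series `Σ_k ((−1)ᵏ/(k+1)!) ad_{X(t)}ᵏ(X′(t))` converges absolutely
and `d/ds exp(X(s))|_{s=t} = exp(X(t)) · Σ_k ((−1)ᵏ/(k+1)!) ad_{X(t)}ᵏ(X′(t))`. -/
theorem stmt14 {n : ℕ} (hn : 1 ≤ n) (X : ℝ → Matrix (Fin n) (Fin n) ℝ)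
    (X' : Matrix (Fin n) (Fin n) ℝ) (t : ℝ) (hX : HasDerivAt X X' t) :
    Summable (fun k : ℕ =>
      ‖((-1 : ℝ) ^ k / (Nat.factorial (k + 1) : ℝ)) • adIter (X t) X' k‖) ∧
    HasDerivAt (fun s => NormedSpace.exp (X s))
      (NormedSpace.exp (X t) *
        ∑' k : ℕ, ((-1 : ℝ) ^ k / (Nat.factorial (k + 1) : ℝ)) • adIter (X t) X' k) t := by
  haveI : Nonempty (Fin n) := ⟨⟨0, hn⟩⟩
  set A : Matrix (Fin n) (Fin n) ℝ := X t with hA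
  -- Part 1: summability
  have hnorm : ∀ k : ℕ, ‖((-1 : ℝ) ^ k / ((k + 1).factorial : ℝ)) • adIter A X' k‖
      = (((k + 1).factorial : ℝ))⁻¹ * ‖adIter A X' k‖ := by
    intro k
    rw [norm_smul, Real.norm_eq_abs, abs_div, abs_pow, abs_neg, abs_one, one_pow,
      abs_of_nonneg (by positivity : (0:ℝ) ≤ ((k + 1).factorial : ℝ)), one_div]
  have hsum1 : Summable (fun k : ℕ =>
      ‖((-1 : ℝ) ^ k / ((k + 1).factorial : ℝ)) • adIter A X' k‖) := by
    refine Summable.of_nonneg_of_le (fun k => norm_nonneg _) (fun k => ?_)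
      ((Real.summable_pow_div_factorial (2 * ‖A‖)).mul_right ‖X'‖)
    rw [hnorm k]
    calc (((k + 1).factorial : ℝ))⁻¹ * ‖adIter A X' k‖
        ≤ ((k.factorial : ℝ))⁻¹ * ((2 * ‖A‖) ^ k * ‖X'‖) := by
          refine mul_le_mul ?_ (norm_adIter_le A X' k) (norm_nonneg _) (by positivity)
          refine inv_anti₀ (by positivity) ?_
          exact_mod_cast Nat.factorial_le (Nat.le_succ k)
      _ = (2 * ‖A‖) ^ k / (k.factorial : ℝ) * ‖X'‖ := by ring
  refine ⟨hsum1, ?_⟩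
  -- Part 2
  set v : Module.End ℝ (Matrix (Fin n) (Fin n) ℝ) :=
    LinearMap.mulRight ℝ A - LinearMap.mulLeft ℝ A with hv
  have hterm : ∀ m : ℕ, ((-1 : ℝ) ^ m / ((m + 1).factorial : ℝ)) • adIter A X' m
      = (((m + 1).factorial : ℝ))⁻¹ • (v ^ m) X' := by
    intro m
    rw [adIter_eq_pow, smul_smul, div_mul_eq_mul_div, ← pow_add,
      Even.neg_one_pow ⟨m, rfl⟩, one_div]
  -- the Fréchet derivative of exp at A
  have hD := aux_exp_hasFDerivAt (𝔸 := Matrix (Fin n) (Fin n) ℝ) A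
  have hcomp := HasFDerivAt.comp_hasDerivAt t hD hX
  -- summability of the coefficient CLM series at A
  have hg : Summable (fun k : ℕ => ((k.factorial : ℝ))⁻¹ • ∑ p ∈ Finset.range k,
      ContinuousLinearMap.mulLeftRight ℝ (Matrix (Fin n) (Fin n) ℝ) (A ^ p) (A ^ (k - 1 - p))) :=
    Summable.of_norm_bounded (aux_summable ‖A‖) (fun k => aux_bound k A le_rfl)
  have happly := (ContinuousLinearMap.apply ℝ (Matrix (Fin n) (Fin n) ℝ) X').hasSum hg.hasSum
  have he : (fun k : ℕ => ContinuousLinearMap.apply ℝ (Matrix (Fin n) (Fin n) ℝ) X'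
        (((k.factorial : ℝ))⁻¹ • ∑ p ∈ Finset.range k,
          ContinuousLinearMap.mulLeftRight ℝ (Matrix (Fin n) (Fin n) ℝ) (A ^ p) (A ^ (k - 1 - p))))
      = fun k : ℕ => ((k.factorial : ℝ))⁻¹ • ∑ p ∈ Finset.range k, A ^ p * X' * A ^ (k - 1 - p) := by
    funext k
    simp [ContinuousLinearMap.sum_apply, ContinuousLinearMap.mulLeftRight_apply]
  rw [he] at happly
  -- identify the derivative value as a single series
  have hval : (∑' k : ℕ, ((k.factorial : ℝ))⁻¹ • ∑ p ∈ Finset.range k,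
        ContinuousLinearMap.mulLeftRight ℝ (Matrix (Fin n) (Fin n) ℝ) (A ^ p) (A ^ (k - 1 - p))) X'
      = ∑' N : ℕ, (((N + 1).factorial : ℝ))⁻¹ •
          ∑ p ∈ Finset.range (N + 1), A ^ p * X' * A ^ (N - p) := by
    have h0 : (∑' k : ℕ, ((k.factorial : ℝ))⁻¹ • ∑ p ∈ Finset.range k,
        ContinuousLinearMap.mulLeftRight ℝ (Matrix (Fin n) (Fin n) ℝ) (A ^ p) (A ^ (k - 1 - p))) X'
        = (ContinuousLinearMap.apply ℝ (Matrix (Fin n) (Fin n) ℝ) X')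
          (∑' k : ℕ, ((k.factorial : ℝ))⁻¹ • ∑ p ∈ Finset.range k,
            ContinuousLinearMap.mulLeftRight ℝ (Matrix (Fin n) (Fin n) ℝ) (A ^ p) (A ^ (k - 1 - p))) := rfl
    rw [h0, ← happly.tsum_eq, Summable.tsum_eq_zero_add happly.summable]
    simp only [Finset.range_zero, Finset.sum_empty, smul_zero, zero_add, Nat.add_sub_cancel]
    exact rfl
  -- per-N identity
  have keyN : ∀ N : ℕ,
      ∑ k ∈ Finset.range (N + 1), ((((k.factorial : ℝ))⁻¹ • A ^ k) *
        ((((N - k + 1).factorial : ℝ))⁻¹ • (v ^ (N - k)) X'))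
      = (((N + 1).factorial : ℝ))⁻¹ • ∑ p ∈ Finset.range (N + 1), A ^ p * X' * A ^ (N - p) := by
    intro N
    have hcomm : Commute (LinearMap.mulLeft ℝ A :
        Module.End ℝ (Matrix (Fin n) (Fin n) ℝ)) (LinearMap.mulRight ℝ A) :=
      LinearMap.commute_mulLeft_right A A
    have lhs_eq : ∑ k ∈ Finset.range (N + 1), ((((k.factorial : ℝ))⁻¹ • A ^ k) *
          ((((N - k + 1).factorial : ℝ))⁻¹ • (v ^ (N - k)) X'))
        = ∑ m ∈ Finset.range (N + 1),
            (((((N - m).factorial : ℝ))⁻¹ * (((m + 1).factorial : ℝ))⁻¹) •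
              (((LinearMap.mulLeft ℝ A : Module.End ℝ (Matrix (Fin n) (Fin n) ℝ)) ^ (N - m)
                * v ^ m) X')) := by
      rw [← Finset.sum_range_reflect (fun m =>
        (((((N - m).factorial : ℝ))⁻¹ * (((m + 1).factorial : ℝ))⁻¹) •
          (((LinearMap.mulLeft ℝ A : Module.End ℝ (Matrix (Fin n) (Fin n) ℝ)) ^ (N - m)
            * v ^ m) X'))) (N + 1)]
      refine Finset.sum_congr rfl fun k hk => ?_
      simp only [Finset.mem_range] at hk
      have hkN : k ≤ N := by omega
      rw [show N + 1 - 1 - k = N - k by omega, show N - (N - k) = k by omega,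
        smul_mul_smul_comm]
      congr 1
      rw [Module.End.mul_apply, LinearMap.pow_mulLeft, LinearMap.mulLeft_apply]
    have rhs_eq : ∑ p ∈ Finset.range (N + 1), A ^ p * X' * A ^ (N - p)
        = ((∑ p ∈ Finset.range (N + 1),
            (LinearMap.mulLeft ℝ A : Module.End ℝ (Matrix (Fin n) (Fin n) ℝ)) ^ p
              * (LinearMap.mulRight ℝ A : Module.End ℝ (Matrix (Fin n) (Fin n) ℝ)) ^ (N - p)) X') := by
      rw [LinearMap.sum_apply]
      refine Finset.sum_congr rfl fun p hp => ?_
      rw [Module.End.mul_apply, LinearMap.pow_mulLeft, LinearMap.pow_mulRight,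
        LinearMap.mulLeft_apply, LinearMap.mulRight_apply, mul_assoc]
    rw [lhs_eq, rhs_eq, aux_E1 hcomm N, ← hv, LinearMap.sum_apply, Finset.smul_sum]
    refine Finset.sum_congr rfl fun m hm => ?_
    simp only [Finset.mem_range] at hm
    rw [LinearMap.smul_apply, ← Nat.cast_smul_eq_nsmul ℝ, smul_smul, aux_coeff N m (by omega)]
  -- summability for the Cauchy product
  have hfs : Summable (fun p : ℕ => ‖((p.factorial : ℝ))⁻¹ • A ^ p‖) :=
    NormedSpace.norm_expSeries_summable' (𝕂 := ℝ) A
  have hgs : Summable (fun m : ℕ => ‖(((m + 1).factorial : ℝ))⁻¹ • (v ^ m) X'‖) :=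
    hsum1.congr fun m => congrArg norm (hterm m)
  have hexpA : NormedSpace.exp A = ∑' p : ℕ, ((p.factorial : ℝ))⁻¹ • A ^ p := by
    rw [NormedSpace.exp_eq_tsum ℝ]
  have hkey : NormedSpace.exp A *
      (∑' k : ℕ, ((-1 : ℝ) ^ k / ((k + 1).factorial : ℝ)) • adIter A X' k)
      = (∑' k : ℕ, ((k.factorial : ℝ))⁻¹ • ∑ p ∈ Finset.range k,
          ContinuousLinearMap.mulLeftRight ℝ (Matrix (Fin n) (Fin n) ℝ) (A ^ p) (A ^ (k - 1 - p))) X' := by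
    calc NormedSpace.exp A *
        (∑' k : ℕ, ((-1 : ℝ) ^ k / ((k + 1).factorial : ℝ)) • adIter A X' k)
        = (∑' p : ℕ, ((p.factorial : ℝ))⁻¹ • A ^ p) *
            (∑' m : ℕ, (((m + 1).factorial : ℝ))⁻¹ • (v ^ m) X') := by
          rw [hexpA, tsum_congr hterm]
      _ = ∑' N : ℕ, ∑ k ∈ Finset.range (N + 1), ((((k.factorial : ℝ))⁻¹ • A ^ k) *
            ((((N - k + 1).factorial : ℝ))⁻¹ • (v ^ (N - k)) X')) :=
          tsum_mul_tsum_eq_tsum_sum_range_of_summable_norm hfs hgs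
      _ = ∑' N : ℕ, (((N + 1).factorial : ℝ))⁻¹ •
            ∑ p ∈ Finset.range (N + 1), A ^ p * X' * A ^ (N - p) := tsum_congr keyN
      _ = _ := hval.symm
  rw [hkey]
  exact hcomp

end MatrixAux
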